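/- Let 𝔤 be the 4-dimensional real Lie algebra with basis X₁, X₂, Y₁, Y₂ whose only nonvanishing bracket among basis elements is [Y₁, Y₂] = X₂ (and [Y₂, Y₁] = −X₂). Let Ω be the alternating bilinear form with Ω(X₁,Y₁) = Ω(X₂,Y₂) = 1 and Ω vanishing on all other pairs of distinct basis elements, and for α > 0 let j_α be the linear map determined by j_α X₁ = αY₁, j_α X₂ = Y₂, j_α Y₁ = −(1/α)X₁, j_α Y₂ = −X₂. Then Ω is a nondegenerate 2-cocycle, j_α is a positive compatible complex structure, the bilinear form g(u,v) := Ω(u, j_α v) is a positive definite inner product, and for every g-orthonormal basis (e₁, e₂, e₃, e₄) of 𝔤 one has Σ_{i=1}^{4} Σ_{k=1}^{4} g(N^{j_α}(e_i, e_k), N^{j_α}(e_i, e_k)) = 8α. -/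

import Mathlib

/-- The algebraic Nijenhuis tensor of a linear map `j` on a Lie algebra. -/
def algNijenhuis {𝔤 : Type*} [LieRing 𝔤] [LieAlgebra ℝ 𝔤] (j : 𝔤 →ₗ[ℝ] 𝔤) (X Y : 𝔤) : 𝔤 :=
  ⁅j X, j Y⁆ - j ⁅j X, Y⁆ - j ⁅X, j Y⁆ - ⁅X, Y⁆

private lemma stmt7_key (α : ℝ) (hα' : α ≠ 0) (c : Fin 4 → Fin 4 → ℝ)
    (horth : ∀ i k : Fin 4, α * (c i 0 * c k 0) + c i 1 * c k 1 + (1/α) * (c i 2 * c k 2)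
      + c i 3 * c k 3 = if i = k then 1 else 0) :
    ∀ l m : Fin 4, ∑ i : Fin 4, c i l * c i m = !![1/α,0,0,0; 0,1,0,0; 0,0,α,0; 0,0,0,1] l m := by
  set G : Matrix (Fin 4) (Fin 4) ℝ := !![α,0,0,0; 0,1,0,0; 0,0,1/α,0; 0,0,0,1] with hG
  set Gi : Matrix (Fin 4) (Fin 4) ℝ := !![1/α,0,0,0; 0,1,0,0; 0,0,α,0; 0,0,0,1] with hGi
  set P : Matrix (Fin 4) (Fin 4) ℝ := Matrix.of c with hP
  have hPG : P * (G * P.transpose) = 1 := by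
    ext i k
    have h := horth i k
    simp only [Matrix.mul_apply, Matrix.transpose_apply, Fin.sum_univ_four, hP, hG,
      Matrix.of_apply, Matrix.one_apply]
    norm_num [Matrix.vecHead, Matrix.vecTail]
    rcases eq_or_ne i k with h' | h' <;> simp [h'] at h ⊢ <;> linarith
  have h2 : (G * P.transpose) * P = 1 := mul_eq_one_comm.mp hPG
  have h3 : G * (P.transpose * P) = 1 := by rw [← Matrix.mul_assoc]; exact h2
  have h4 : Gi * G = 1 := by
    ext l m
    fin_cases l <;> fin_cases m <;>
      simp (config := { decide := true }) [hG, hGi, Matrix.mul_apply, Fin.sum_univ_four,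
        Matrix.one_apply, Matrix.vecHead, Matrix.vecTail] <;>
      field_simp
  have h5 : P.transpose * P = Gi := by
    calc P.transpose * P = (Gi * G) * (P.transpose * P) := by rw [h4, Matrix.one_mul]
    _ = Gi * (G * (P.transpose * P)) := by rw [Matrix.mul_assoc]
    _ = Gi := by rw [h3, Matrix.mul_one]
  intro l m
  have := congrFun (congrFun h5 l) m
  simpa [Matrix.mul_apply, Matrix.transpose_apply, hP, Matrix.of_apply] using this

private lemma stmt7_sum (α : ℝ) (hα : 0 < α) (c : Fin 4 → Fin 4 → ℝ)
    (key : ∀ l m : Fin 4, ∑ i : Fin 4, c i l * c i m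
      = !![1/α,0,0,0; 0,1,0,0; 0,0,α,0; 0,0,0,1] l m) :
    ∑ i : Fin 4, ∑ k : Fin 4,
      ((α * (c i 0 * c k 1 - c i 1 * c k 0) - (c i 2 * c k 3 - c i 3 * c k 2))^2 +
       (-α * (c i 0 * c k 3 - c i 3 * c k 0) + (c i 1 * c k 2 - c i 2 * c k 1))^2) = 8 * α := by
  have hα' : α ≠ 0 := ne_of_gt hα
  have L1 : ∀ p0 p1 p2 p3 : ℝ, (∑ k : Fin 4,
      (p0 * c k 0 + p1 * c k 1 + p2 * c k 2 + p3 * c k 3)^2)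
      = (1/α) * p0^2 + p1^2 + α * p2^2 + p3^2 := by
    intro p0 p1 p2 p3
    have expand : ∀ k : Fin 4, (p0 * c k 0 + p1 * c k 1 + p2 * c k 2 + p3 * c k 3)^2 =
        p0*p0*(c k 0 * c k 0) + p1*p1*(c k 1 * c k 1) + p2*p2*(c k 2 * c k 2)
        + p3*p3*(c k 3 * c k 3)
        + (2*p0*p1)*(c k 0 * c k 1) + (2*p0*p2)*(c k 0 * c k 2) + (2*p0*p3)*(c k 0 * c k 3)
        + (2*p1*p2)*(c k 1 * c k 2) + (2*p1*p3)*(c k 1 * c k 3) + (2*p2*p3)*(c k 2 * c k 3) :=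
      fun k => by ring
    rw [Finset.sum_congr rfl fun k _ => expand k]
    simp only [Finset.sum_add_distrib, ← Finset.mul_sum, key]
    simp only [Matrix.of_apply, Matrix.cons_val]
    norm_num [Matrix.vecHead, Matrix.vecTail]
    ring
  have inner : ∀ i : Fin 4, (∑ k : Fin 4,
      ((α * (c i 0 * c k 1 - c i 1 * c k 0) - (c i 2 * c k 3 - c i 3 * c k 2))^2 +
       (-α * (c i 0 * c k 3 - c i 3 * c k 0) + (c i 1 * c k 2 - c i 2 * c k 1))^2))
      = 2*α^2*(c i 0 * c i 0) + 2*α*(c i 1 * c i 1) + 2*(c i 2 * c i 2)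
        + 2*α*(c i 3 * c i 3) := by
    intro i
    rw [Finset.sum_add_distrib]
    have e1 : (∑ k : Fin 4,
        (α * (c i 0 * c k 1 - c i 1 * c k 0) - (c i 2 * c k 3 - c i 3 * c k 2))^2)
        = ∑ k : Fin 4, ((-(α * c i 1)) * c k 0 + (α * c i 0) * c k 1
          + (c i 3) * c k 2 + (-(c i 2)) * c k 3)^2 :=
      Finset.sum_congr rfl fun k _ => by ring
    have e2 : (∑ k : Fin 4,
        (-α * (c i 0 * c k 3 - c i 3 * c k 0) + (c i 1 * c k 2 - c i 2 * c k 1))^2)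
        = ∑ k : Fin 4, ((α * c i 3) * c k 0 + (-(c i 2)) * c k 1
          + (c i 1) * c k 2 + (-(α * c i 0)) * c k 3)^2 :=
      Finset.sum_congr rfl fun k _ => by ring
    rw [e1, e2, L1, L1]
    field_simp
    ring
  rw [Finset.sum_congr rfl fun i _ => inner i]
  simp only [Finset.sum_add_distrib, ← Finset.mul_sum, key]
  simp only [Matrix.of_apply, Matrix.cons_val]
  norm_num [Matrix.vecHead, Matrix.vecTail]
  field_simp
  ring

/-- the Lie algebra of Thurston's manifold `ℝ × H₃`.
Basis `b 0 = X₁`, `b 1 = X₂`, `b 2 = Y₁`, `b 3 = Y₂`; only nonvanishing bracket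
`⁅Y₁, Y₂⁆ = X₂`; `Ω = X₁* ∧ Y₁* + X₂* ∧ Y₂*`; `j_α X₁ = α Y₁`, `j_α X₂ = Y₂`,
`j_α Y₁ = -(1/α) X₁`, `j_α Y₂ = -X₂` for `α > 0`.  Then `Ω` is a nondegenerate 2-cocycle,
`j_α` is a positive compatible complex structure, `g u v := Ω u (j_α v)` is a positive
definite inner product, and for every `g`-orthonormal basis `e` the squared norm of the
Nijenhuis tensor `∑ i, ∑ k, g (N (e i) (e k)) (N (e i) (e k))` equals `8α`. -/
theorem stmt_7 (𝔤 : Type*) [LieRing 𝔤] [LieAlgebra ℝ 𝔤]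
    (b : Module.Basis (Fin 4) ℝ 𝔤)
    (hbr : ∀ i k : Fin 4, ⁅b i, b k⁆ =
      if i = 2 ∧ k = 3 then b 1 else if i = 3 ∧ k = 2 then -(b 1) else 0)
    (Ω : 𝔤 →ₗ[ℝ] 𝔤 →ₗ[ℝ] ℝ)
    (hΩ : ∀ i k : Fin 4, Ω (b i) (b k) =
      !![0,0,1,0; 0,0,0,1; -1,0,0,0; 0,-1,0,0] i k)
    (α : ℝ) (hα : 0 < α)
    (j : 𝔤 →ₗ[ℝ] 𝔤)
    (hj0 : j (b 0) = α • b 2) (hj1 : j (b 1) = b 3)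
    (hj2 : j (b 2) = -((1/α) • b 0)) (hj3 : j (b 3) = -(b 1)) :
    (∀ X : 𝔤, (∀ Y : 𝔤, Ω X Y = 0) → X = 0) ∧
    (∀ X Y Z : 𝔤, Ω ⁅X, Y⁆ Z + Ω ⁅Y, Z⁆ X + Ω ⁅Z, X⁆ Y = 0) ∧
    (∀ X : 𝔤, j (j X) = -X) ∧
    (∀ X Y : 𝔤, Ω (j X) (j Y) = Ω X Y) ∧
    (∀ X : 𝔤, X ≠ 0 → 0 < Ω X (j X)) ∧
    (∀ u v : 𝔤, Ω u (j v) = Ω v (j u)) ∧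
    (∀ u : 𝔤, u ≠ 0 → 0 < Ω u (j u)) ∧
    (∀ e : Module.Basis (Fin 4) ℝ 𝔤,
      (∀ i k : Fin 4, Ω (e i) (j (e k)) = if i = k then 1 else 0) →
      ∑ i : Fin 4, ∑ k : Fin 4,
        Ω (algNijenhuis j (e i) (e k)) (j (algNijenhuis j (e i) (e k))) = 8 * α) := by
  have hα' : α ≠ 0 := ne_of_gt hα
  have hsum : ∀ X : 𝔤, X = ∑ l : Fin 4, b.repr X l • b l := fun X => (b.sum_repr X).symm
  set B : 𝔤 →ₗ[ℝ] 𝔤 →ₗ[ℝ] 𝔤 :=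
    LinearMap.mk₂ ℝ (fun X Y => ⁅X, Y⁆) add_lie smul_lie lie_add lie_smul with hBdef
  have hB : ∀ X Y : 𝔤, ⁅X, Y⁆ = B X Y := fun _ _ => rfl
  have hBb : ∀ i k : Fin 4, B (b i) (b k) =
      if i = 2 ∧ k = 3 then b 1 else if i = 3 ∧ k = 2 then -(b 1) else 0 := by
    intro i k; rw [← hB, hbr]
  have hbrc : ∀ (x y : Fin 4 → ℝ), ⁅∑ l : Fin 4, x l • b l, ∑ m : Fin 4, y m • b m⁆
      = (x 2 * y 3 - x 3 * y 2) • b 1 := by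
    intro x y
    rw [hB]
    simp only [Fin.sum_univ_four, map_add, map_smul, LinearMap.add_apply,
      LinearMap.smul_apply, hBb]
    simp (config := { decide := true }) only [smul_zero, smul_neg, zero_add, add_zero,
      if_true, if_false, ite_true, ite_false]
    module
  have hΩc : ∀ (x y : Fin 4 → ℝ), Ω (∑ l : Fin 4, x l • b l) (∑ m : Fin 4, y m • b m)
      = x 0 * y 2 + x 1 * y 3 - x 2 * y 0 - x 3 * y 1 := by
    intro x y
    simp only [Fin.sum_univ_four, map_add, map_smul, LinearMap.add_apply,
      LinearMap.smul_apply, hΩ, smul_eq_mul]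
    simp only [Matrix.of_apply, Matrix.cons_val]
    norm_num [Matrix.vecHead, Matrix.vecTail]
    ring
  have hjc : ∀ (x : Fin 4 → ℝ), j (∑ l : Fin 4, x l • b l)
      = (-(x 2 / α)) • b 0 + (-(x 3)) • b 1 + (α * x 0) • b 2 + x 1 • b 3 := by
    intro x
    simp only [Fin.sum_univ_four, map_add, map_smul, hj0, hj1, hj2, hj3]
    rw [div_eq_mul_inv, mul_comm]
    module
  have hg : ∀ (x y : Fin 4 → ℝ), Ω (∑ l : Fin 4, x l • b l) (j (∑ m : Fin 4, y m • b m))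
      = α * (x 0 * y 0) + x 1 * y 1 + (1/α) * (x 2 * y 2) + x 3 * y 3 := by
    intro x y
    rw [hjc]
    simp only [Fin.sum_univ_four, map_add, map_smul, map_neg, LinearMap.add_apply,
      LinearMap.smul_apply, LinearMap.neg_apply, hΩ, smul_eq_mul]
    simp only [Matrix.of_apply, Matrix.cons_val]
    norm_num [Matrix.vecHead, Matrix.vecTail]
    field_simp
    ring
  have hNc : ∀ (x y : Fin 4 → ℝ), algNijenhuis j (∑ l : Fin 4, x l • b l) (∑ m : Fin 4, y m • b m)
      = (α * (x 0 * y 1 - x 1 * y 0) - (x 2 * y 3 - x 3 * y 2)) • b 1 +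
        (-α * (x 0 * y 3 - x 3 * y 0) + (x 1 * y 2 - x 2 * y 1)) • b 3 := by
    intro x y
    rw [algNijenhuis, hjc x, hjc y, hbrc]
    rw [hB, hB, hB]
    simp only [Fin.sum_univ_four, map_add, map_smul, map_neg, map_sub, LinearMap.add_apply,
      LinearMap.smul_apply, LinearMap.neg_apply, hBb, hj0, hj1, hj2, hj3]
    simp (config := { decide := true }) only [smul_zero, smul_neg, zero_add, add_zero,
      neg_zero, if_true, if_false, ite_true, ite_false, map_zero, map_neg, map_smul,
      hj0, hj1, hj2, hj3]
    match_scalars <;> field_simp <;> ring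
  -- positivity of g, proved once
  have hpos : ∀ X : 𝔤, X ≠ 0 → 0 < Ω X (j X) := by
    intro X hX
    have hgx : Ω X (j X) = α * (b.repr X 0 * b.repr X 0) + b.repr X 1 * b.repr X 1
        + (1/α) * (b.repr X 2 * b.repr X 2) + b.repr X 3 * b.repr X 3 := by
      conv_lhs => rw [hsum X]
      exact hg _ _
    have hex : ∃ l, b.repr X l ≠ 0 := by
      by_contra h
      push_neg at h
      apply hX
      calc X = ∑ l : Fin 4, b.repr X l • b l := hsum X
      _ = 0 := by simp [h]
    obtain ⟨l, hl⟩ := hex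
    rw [hgx]
    have n0 : 0 ≤ α * (b.repr X 0 * b.repr X 0) := mul_nonneg hα.le (mul_self_nonneg _)
    have n1 : 0 ≤ b.repr X 1 * b.repr X 1 := mul_self_nonneg _
    have n2 : 0 ≤ (1/α) * (b.repr X 2 * b.repr X 2) :=
      mul_nonneg (by positivity) (mul_self_nonneg _)
    have n3 : 0 ≤ b.repr X 3 * b.repr X 3 := mul_self_nonneg _
    have h1α : (0:ℝ) < 1/α := by positivity
    fin_cases l
    · have := mul_pos hα (mul_self_pos.mpr (show b.repr X 0 ≠ 0 from hl)); linarith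
    · have := mul_self_pos.mpr (show b.repr X 1 ≠ 0 from hl); linarith
    · have := mul_pos h1α (mul_self_pos.mpr (show b.repr X 2 ≠ 0 from hl)); linarith
    · have := mul_self_pos.mpr (show b.repr X 3 ≠ 0 from hl); linarith
  refine ⟨?_, ?_, ?_, ?_, hpos, ?_, hpos, ?_⟩
  · -- nondegeneracy
    intro X hX
    have hm : ∀ m : Fin 4, Ω (∑ l : Fin 4, b.repr X l • b l) (b m) = 0 := by
      intro m; rw [← hsum X]; exact hX (b m)
    have h0 := hm 0; have h1 := hm 1; have h2 := hm 2; have h3 := hm 3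
    simp only [Fin.sum_univ_four, map_add, map_smul, LinearMap.add_apply,
      LinearMap.smul_apply, hΩ, smul_eq_mul] at h0 h1 h2 h3
    simp only [Matrix.of_apply, Matrix.cons_val] at h0 h1 h2 h3
    norm_num [Matrix.vecHead, Matrix.vecTail] at h0 h1 h2 h3
    calc X = ∑ l : Fin 4, b.repr X l • b l := hsum X
    _ = 0 := by
      rw [Fin.sum_univ_four]
      rw [h0, h1, h2, h3]
      simp
  · -- cocycle
    intro X Y Z
    rw [hsum X, hsum Y, hsum Z, hbrc, hbrc, hbrc]
    simp only [Fin.sum_univ_four, map_add, map_smul, LinearMap.add_apply,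
      LinearMap.smul_apply, hΩ, smul_eq_mul]
    norm_num [Matrix.vecHead, Matrix.vecTail]
    ring
  · -- complex structure
    intro X
    have h : j.comp j = -LinearMap.id := by
      apply b.ext
      intro i
      fin_cases i <;>
        simp [hj0, hj1, hj2, hj3, smul_smul, mul_one_div_cancel hα',
          one_div, inv_mul_cancel₀ hα', mul_inv_cancel₀ hα']
    have := LinearMap.ext_iff.mp h X
    simpa using this
  · -- compatibility
    intro X Y
    rw [hsum X, hsum Y, hΩc, hjc, hjc]
    simp only [map_add, map_smul, map_neg, LinearMap.add_apply,
      LinearMap.smul_apply, LinearMap.neg_apply, hΩ, smul_eq_mul]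
    simp only [Matrix.of_apply, Matrix.cons_val]
    norm_num [Matrix.vecHead, Matrix.vecTail]
    field_simp
    ring
  · -- symmetry
    intro u v
    rw [hsum u, hsum v, hg, hg]
    ring
  · -- the norm of the Nijenhuis tensor
    intro e he
    have hce : ∀ i, e i = ∑ l : Fin 4, b.repr (e i) l • b l := fun i => hsum (e i)
    have horth : ∀ i k : Fin 4,
        α * (b.repr (e i) 0 * b.repr (e k) 0) + b.repr (e i) 1 * b.repr (e k) 1
        + (1/α) * (b.repr (e i) 2 * b.repr (e k) 2) + b.repr (e i) 3 * b.repr (e k) 3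
        = if i = k then 1 else 0 := by
      intro i k
      have h := he i k
      rw [hce i, hce k, hg] at h
      exact h
    have key := stmt7_key α hα' (fun i l => b.repr (e i) l) horth
    have hgg : ∀ A C : ℝ, Ω (A • b 1 + C • b 3) (j (A • b 1 + C • b 3)) = A^2 + C^2 := by
      intro A C
      simp only [map_add, map_smul, hj1, hj3, LinearMap.add_apply, LinearMap.smul_apply,
        map_neg, LinearMap.neg_apply, smul_neg, hΩ, smul_eq_mul]
      simp only [Matrix.of_apply, Matrix.cons_val]
      norm_num [Matrix.vecHead, Matrix.vecTail]
      ring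
    have hterm : ∀ i k : Fin 4,
        Ω (algNijenhuis j (e i) (e k)) (j (algNijenhuis j (e i) (e k)))
        = (α * (b.repr (e i) 0 * b.repr (e k) 1 - b.repr (e i) 1 * b.repr (e k) 0)
            - (b.repr (e i) 2 * b.repr (e k) 3 - b.repr (e i) 3 * b.repr (e k) 2))^2
        + (-α * (b.repr (e i) 0 * b.repr (e k) 3 - b.repr (e i) 3 * b.repr (e k) 0)
            + (b.repr (e i) 1 * b.repr (e k) 2 - b.repr (e i) 2 * b.repr (e k) 1))^2 := by
      intro i k
      conv_lhs => rw [hce i, hce k, hNc, hgg]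
    rw [Finset.sum_congr rfl fun i _ => Finset.sum_congr rfl fun k _ => hterm i k]
    exact stmt7_sum α hα (fun i l => b.repr (e i) l) key
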